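/- The linear functional equation Φ(x) − (1/2)·Φ(sin x) = −x, x ∈ [-1,1], has a unique continuous solution Φ : [-1,1] → ℂ, and this solution belongs to the Gevrey class G_1([-1,1]). -/

import Mathlib

open Metric Set Filter

noncomputable section

/-- The segment `[-1,1]` viewed inside `ℂ`. -/
def seg : Set ℂ := (fun x : ℝ => (x : ℂ)) '' Set.Icc (-1) 1

/-- The neighborhood `[-1,1]_r` of the segment. -/
def nbd (r : ℝ) : Set ℂ := {z : ℂ | Metric.infDist z seg < r}

/-- The set `[-1,1]_{k,A,n}`. -/
def tube (k A : ℝ) (n : ℕ) : Set ℂ :=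
  {z : ℂ | Metric.infDist z seg < A * (n : ℝ) ^ (-(1 : ℝ) / k)}

/-- Sup norm of `f` on `S`. -/
def supOn (f : ℂ → ℂ) (S : Set ℂ) : ℝ := sSup ((fun z => ‖f z‖) '' S)

/-- The Gevrey class `G_k([-1,1])`. -/
def GevreyClass (k : ℝ) (f : ℝ → ℂ) : Prop :=
  ContDiffOn ℝ (⊤ : ℕ∞) f (Set.Icc (-1) 1) ∧
  ∃ C > 0, ∃ A > 0, ∀ n : ℕ, ∀ x ∈ Set.Icc (-1 : ℝ) 1,
    ‖iteratedDerivWithin n f (Set.Icc (-1 : ℝ) 1) x‖ ≤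
      C * A ^ n * (n : ℝ) ^ ((n : ℝ) * (1 + 1 / k))

/-- `(f_n)_{n ≥ 1}` is a `k`-sequence. -/
def IsKSeq (k : ℝ) (f : ℕ → ℂ → ℂ) : Prop :=
  ∃ B > 0, ∃ C > 0, ∃ θ ∈ Set.Ioo (0 : ℝ) 1, ∀ n : ℕ, 1 ≤ n →
    DifferentiableOn ℂ (f n) (tube k B n) ∧ ∀ z ∈ tube k B n, ‖f n z‖ ≤ C * θ ^ n

/-- The `E(k)` property with threshold `τ` for a sequence of functions on `[-1,1]_σ`. -/
def EPropWith (k σ : ℝ) (φ : ℕ → ℂ → ℂ) (τ : ℝ) : Prop :=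
  0 < τ ∧ τ ≤ σ ∧ ∀ A : ℝ, 0 < A → A ≤ τ → ∃ M : ℕ, ∀ n : ℕ, M ≤ n → ∀ p : ℕ,
    ∀ z ∈ tube k A (n + 1), φ p z ∈ tube k A n

/-- The `E(k)` property. -/
def EProp (k σ : ℝ) (φ : ℕ → ℂ → ℂ) : Prop := ∃ τ : ℝ, EPropWith k σ φ τ

/-- `T` is a linear operator on functions. -/
def IsLinOp (T : (ℂ → ℂ) → ℂ → ℂ) : Prop :=
  (∀ f g : ℂ → ℂ, T (f + g) = T f + T g) ∧ ∀ (c : ℂ) (f : ℂ → ℂ), T (c • f) = c • T f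

/-- The quantitative part of the `A(k)` property, for a given `A` and integer `N = N(A)`. -/
def APropAt (k : ℝ) (T : (ℂ → ℂ) → ℂ → ℂ) (ρ A : ℝ) (N : ℕ) : Prop :=
  ∀ n : ℕ, N ≤ n → ∀ f : ℂ → ℂ, DifferentiableOn ℂ f (tube k A n) →
    BddAbove ((fun z => ‖f z‖) '' tube k A n) →
    DifferentiableOn ℂ (T f) (tube k A (n + 1)) ∧
      ∀ z ∈ tube k A (n + 1), ‖T f z‖ ≤ ρ * supOn f (tube k A n)

/-- The `A(k)` property with `k`-threshold `τ` and contraction constant `ρ`. -/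
def AProp (k : ℝ) (T : (ℂ → ℂ) → ℂ → ℂ) (τ ρ : ℝ) : Prop :=
  0 < τ ∧ ρ ∈ Set.Ioo (0 : ℝ) 1 ∧
  (∀ A : ℝ, 0 < A → A ≤ τ → ∃ N : ℕ, APropAt k T ρ A N) ∧
  (∀ f : ℂ → ℂ, (∃ r > 0, DifferentiableOn ℂ f (nbd r)) →
      ∀ z ∈ seg, ‖T f z‖ ≤ ρ * supOn f seg)
namespace SinEqAux

/-- Iterates of complex sine: `S n = sin ∘ ... ∘ sin` (n times). -/
def S : ℕ → ℂ → ℂ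
  | 0 => fun z => z
  | n + 1 => fun z => S n (Complex.sin z)

lemma S_succ (n : ℕ) (z : ℂ) : S (n + 1) z = S n (Complex.sin z) := rfl

lemma S_succ' (n : ℕ) (z : ℂ) : S (n + 1) z = Complex.sin (S n z) := by
  induction n generalizing z with
  | zero => rfl
  | succ k ih => rw [S_succ, ih, ← S_succ]

lemma S_diff (n : ℕ) : Differentiable ℂ (S n) := by
  induction n with
  | zero => exact differentiable_id
  | succ k ih => exact ih.comp Complex.differentiable_sin

/-- Iterates of real sine. -/
def sR : ℕ → ℝ → ℝ
  | 0 => fun t => t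
  | n + 1 => fun t => sR n (Real.sin t)

lemma S_ofReal (n : ℕ) (t : ℝ) : S n (t : ℂ) = ((sR n t : ℝ) : ℂ) := by
  induction n generalizing t with
  | zero => rfl
  | succ k ih =>
    show S k (Complex.sin t) = _
    rw [← Complex.ofReal_sin, ih]
    rfl

lemma sR_le (n : ℕ) (t : ℝ) : |sR (n + 1) t| ≤ 1 := by
  induction n generalizing t with
  | zero => exact abs_le.2 ⟨Real.neg_one_le_sin t, Real.sin_le_one t⟩
  | succ k ih => exact ih (Real.sin t)

lemma S_norm_le_one {n : ℕ} {t : ℝ} (ht : |t| ≤ 1) : ‖S n (t : ℂ)‖ ≤ 1 := by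
  cases n with
  | zero => show ‖(t:ℂ)‖ ≤ 1; simpa using ht
  | succ k =>
    rw [S_ofReal]
    simpa using sR_le k t

lemma sinh_le_cubic {b : ℝ} (hb0 : 0 ≤ b) (hb1 : b ≤ 1) : Real.sinh b ≤ b + b ^ 3 := by
  have habs : |b| ≤ 1 := by rwa [abs_of_nonneg hb0]
  have h1 := Real.exp_bound habs (n := 3) (by norm_num)
  have h2 := Real.exp_bound (x := -b) (by rwa [abs_neg]) (n := 3) (by norm_num)
  have e1 : ∑ m ∈ Finset.range 3, b ^ m / (m.factorial : ℝ) = 1 + b + b ^ 2 / 2 := by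
    norm_num [Finset.sum_range_succ, Nat.factorial]
  have e2 : ∑ m ∈ Finset.range 3, (-b) ^ m / (m.factorial : ℝ) = 1 - b + b ^ 2 / 2 := by
    norm_num [Finset.sum_range_succ, Nat.factorial]
    ring
  rw [e1] at h1
  rw [e2] at h2
  rw [abs_neg, abs_of_nonneg hb0] at h2
  rw [abs_of_nonneg hb0] at h1
  have hf : (((3:ℕ).succ : ℝ) / ((Nat.factorial 3 : ℕ) * (3:ℕ))) = 2/9 := by
    norm_num [Nat.factorial]
  have A1 := (abs_le.1 h1).2
  have A2 := (abs_le.1 h2).1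
  rw [hf] at A1 A2
  rw [Real.sinh_eq]
  nlinarith [pow_nonneg hb0 3]

lemma cosh_one_le_two : Real.cosh 1 ≤ 2 := by
  rw [Real.cosh_eq]
  have h1 : Real.exp 1 < 2.7182818286 := Real.exp_one_lt_d9
  have h2 : Real.exp (-1) ≤ 1 := by
    rw [Real.exp_neg]
    have : 1 ≤ Real.exp 1 := by
      have := Real.add_one_le_exp (1:ℝ); linarith
    rw [inv_le_one_iff₀]; right; exact this
  linarith

lemma cosh_le_two {b : ℝ} (hb : |b| ≤ 1) : Real.cosh b ≤ 2 :=
  le_trans (Real.cosh_le_cosh.2 (by simpa using hb)) cosh_one_le_two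

lemma sin_im_eq (w : ℂ) : (Complex.sin w).im = Real.cos w.re * Real.sinh w.im := by
  rw [Complex.sin_eq, ← Complex.ofReal_sin, ← Complex.ofReal_cos, ← Complex.ofReal_sinh,
    ← Complex.ofReal_cosh]
  simp [Complex.cos_ofReal_re, Complex.sinh_ofReal_re, Complex.sin_ofReal_re, Complex.cosh_ofReal_re, Complex.sinh_ofReal_im, Complex.cosh_ofReal_im, Complex.sin_ofReal_im, Complex.cos_ofReal_im]

lemma sin_re_eq (w : ℂ) : (Complex.sin w).re = Real.sin w.re * Real.cosh w.im := by
  rw [Complex.sin_eq, ← Complex.ofReal_sin, ← Complex.ofReal_cos, ← Complex.ofReal_sinh,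
    ← Complex.ofReal_cosh]
  simp [Complex.cos_ofReal_re, Complex.sinh_ofReal_re, Complex.sin_ofReal_re, Complex.cosh_ofReal_re, Complex.sinh_ofReal_im, Complex.cosh_ofReal_im, Complex.sin_ofReal_im, Complex.cos_ofReal_im]

lemma abs_sin_im_le (w : ℂ) : |(Complex.sin w).im| ≤ Real.sinh |w.im| := by
  rw [sin_im_eq, abs_mul, ← Real.abs_sinh]
  calc |Real.cos w.re| * |Real.sinh w.im| ≤ 1 * |Real.sinh w.im| := by
        gcongr
        exact Real.abs_cos_le_one _
    _ = |Real.sinh w.im| := one_mul _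

lemma abs_sin_re_le (w : ℂ) : |(Complex.sin w).re| ≤ Real.cosh w.im := by
  rw [sin_re_eq, abs_mul]
  calc |Real.sin w.re| * |Real.cosh w.im| ≤ 1 * |Real.cosh w.im| := by
        gcongr
        exact Real.abs_sin_le_one _
    _ = Real.cosh w.im := by rw [one_mul, abs_of_pos (Real.cosh_pos _)]

/-- The strip estimate: iterates of sine stay in a thin strip. -/
lemma strip {n : ℕ} (hn : 1 ≤ n) {z : ℂ} (hz : |z.im| ≤ 1 / (4 * n)) :
    ∀ j, j ≤ n → |(S j z).im| ≤ 1 / (4 * n) + 8 * j * (1 / (4 * n)) ^ 3 := by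
  have hn' : (1:ℝ) ≤ n := by exact_mod_cast hn
  set c : ℝ := 1 / (4 * n) with hc
  have hc0 : 0 < c := by positivity
  have hc4 : c ≤ 1 / 4 := by
    rw [hc]
    rw [div_le_div_iff₀ (by positivity) (by norm_num)]
    linarith
  have hkey : ∀ j : ℕ, (j : ℝ) ≤ n → c + 8 * j * c ^ 3 ≤ 2 * c := by
    intro j hj
    have h1 : 8 * (j:ℝ) * c ^ 3 ≤ 8 * (n:ℝ) * c ^ 3 := by
      have : (0:ℝ) ≤ c ^ 3 := by positivity
      nlinarith
    have h2 : 8 * (n:ℝ) * c ^ 3 ≤ c := by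
      have hcn : c * (4 * n) = 1 := by
        rw [hc]; field_simp
      nlinarith [sq_nonneg c, hc0.le]
    linarith
  intro j hj
  induction j with
  | zero => simpa [S] using hz
  | succ p ih =>
    have hp : p ≤ n := le_trans (Nat.le_succ p) hj
    have hihb := ih hp
    set b : ℝ := |(S p z).im| with hb
    have hb0 : 0 ≤ b := abs_nonneg _
    have hble : b ≤ 2 * c := le_trans hihb (hkey p (by exact_mod_cast hp))
    have hb1 : b ≤ 1 := by nlinarith
    calc |(S (p + 1) z).im| = |(Complex.sin (S p z)).im| := by rw [S_succ']
      _ ≤ Real.sinh b := abs_sin_im_le _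
      _ ≤ b + b ^ 3 := sinh_le_cubic hb0 hb1
      _ ≤ c + 8 * (p + 1 : ℕ) * c ^ 3 := by
          have h3 : b ^ 3 ≤ (2 * c) ^ 3 := pow_le_pow_left₀ hb0 hble 3
          have h4 : (2 * c) ^ 3 = 8 * c ^ 3 := by ring
          push_cast
          linarith

/-- Iterates of sine are bounded by 3 on a strip of width `1/(4n)`. -/
lemma S_norm_le {n : ℕ} (hn : 1 ≤ n) {z : ℂ} (hz : |z.im| ≤ 1 / (4 * n)) :
    ‖S n z‖ ≤ 3 := by
  obtain ⟨m, rfl⟩ : ∃ m, n = m + 1 := ⟨n - 1, (Nat.succ_pred_eq_of_pos hn).symm⟩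
  have hn' : (1:ℝ) ≤ (m + 1 : ℕ) := by exact_mod_cast hn
  set c : ℝ := 1 / (4 * (m + 1 : ℕ)) with hc
  have hc0 : 0 < c := by positivity
  have hc4 : c ≤ 1 / 4 := by
    rw [hc, div_le_div_iff₀ (by positivity) (by norm_num)]
    linarith
  have hstrip := strip hn hz m (Nat.le_succ m)
  have hble : |(S m z).im| ≤ 2 * c := by
    have h1 : 8 * (m:ℝ) * c ^ 3 ≤ 8 * ((m + 1 : ℕ):ℝ) * c ^ 3 := by
      have hmle : (m:ℝ) ≤ ((m + 1 : ℕ):ℝ) := by exact_mod_cast Nat.le_succ m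
      nlinarith [pow_pos hc0 3]
    have hcn : c * (4 * ((m + 1 : ℕ):ℝ)) = 1 := by
      rw [hc]; field_simp
    have e : 8 * ((m + 1 : ℕ):ℝ) * c ^ 3 = 2 * c ^ 2 * (c * (4 * ((m + 1 : ℕ):ℝ))) := by ring
    rw [hcn, mul_one] at e
    have h2 : 8 * ((m + 1 : ℕ):ℝ) * c ^ 3 ≤ c := by
      rw [e]; nlinarith [hc0, hc4]
    calc |(S m z).im| ≤ c + 8 * (m:ℝ) * c ^ 3 := hstrip
      _ ≤ c + 8 * ((m + 1 : ℕ):ℝ) * c ^ 3 := by linarith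
      _ ≤ c + c := by linarith
      _ = 2 * c := by ring
  set w := S m z with hw
  have him' : |w.im| ≤ 1 / 2 := by
    have : 2 * c ≤ 1 / 2 := by linarith
    linarith [hble]
  have him : |w.im| ≤ 1 := by linarith
  have hre : |(Complex.sin w).re| ≤ 2 := le_trans (abs_sin_re_le w) (cosh_le_two him)
  have him2 : |(Complex.sin w).im| ≤ 1 := by
    refine le_trans (abs_sin_im_le w) ?_
    have h1 : Real.sinh |w.im| ≤ |w.im| + |w.im| ^ 3 := sinh_le_cubic (abs_nonneg _) him
    have h2 : |w.im| ^ 3 ≤ (1/2) ^ 3 := pow_le_pow_left₀ (abs_nonneg _) him' 3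
    have h3 : ((1:ℝ)/2) ^ 3 = 1/8 := by norm_num
    linarith
  calc ‖S (m + 1) z‖ = ‖Complex.sin w‖ := by simp only [S_succ', hw]
    _ ≤ |(Complex.sin w).re| + |(Complex.sin w).im| := Complex.norm_le_abs_re_add_abs_im _
    _ ≤ 2 + 1 := add_le_add hre him2
    _ = 3 := by norm_num

/-- Cauchy estimate for iterated derivatives of an entire function. -/
lemma cauchy_est {F : ℂ → ℂ} (hF : Differentiable ℂ F) {c : ℂ} {R M : ℝ} (hR : 0 < R)
    (hM : ∀ w ∈ Metric.closedBall c R, ‖F w‖ ≤ M) (k : ℕ) :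
    ‖iteratedDeriv k F c‖ ≤ k.factorial * M / R ^ k := by
  set R' : NNReal := ⟨R, hR.le⟩ with hR'
  have hR'0 : 0 < R' := by exact_mod_cast hR
  have hps : HasFPowerSeriesOnBall F (cauchyPowerSeries F c R') c R' :=
    DifferentiableOn.hasFPowerSeriesOnBall hF.differentiableOn hR'0
  have h1 : iteratedDeriv k F c = k.factorial • (cauchyPowerSeries F c R' k fun _ => (1:ℂ)) := by
    rw [iteratedDeriv_eq_iteratedFDeriv, ← hps.factorial_smul]
  have hM0 : 0 ≤ M := le_trans (norm_nonneg _) (hM c (Metric.mem_closedBall_self hR.le))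
  have hcoef : ‖cauchyPowerSeries F c R' k fun _ => (1:ℂ)‖ ≤ M * (R⁻¹) ^ k := by
    have hle := ContinuousMultilinearMap.le_opNorm (cauchyPowerSeries F c R' k)
      (fun _ => (1:ℂ))
    have hprod : (∏ _i : Fin k, ‖(1:ℂ)‖) = 1 := by simp
    rw [hprod, mul_one] at hle
    refine le_trans hle ?_
    have hnorm := norm_cauchyPowerSeries_le F c R' k
    have hint : (∫ θ in (0:ℝ)..2 * Real.pi, ‖F (circleMap c R' θ)‖) ≤ 2 * Real.pi * M := by
      have hmono := intervalIntegral.integral_mono_on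
        (by positivity : (0:ℝ) ≤ 2 * Real.pi)
        (((hF.continuous.comp (continuous_circleMap c R')).norm).intervalIntegrable 0 (2 * Real.pi))
        ((intervalIntegrable_const : IntervalIntegrable (fun _ => M) MeasureTheory.volume 0 (2 * Real.pi)))
        (fun θ _ => hM _ (circleMap_mem_closedBall c hR.le θ))
      simpa [intervalIntegral.integral_const, smul_eq_mul, mul_comm] using hmono
    refine le_trans hnorm ?_
    have habs : |(R' : ℝ)| = R := by
      show |R| = R; exact abs_of_pos hR
    rw [habs]
    have h2pi : (0:ℝ) < (2 * Real.pi)⁻¹ := by positivity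
    have : (2 * Real.pi)⁻¹ * (∫ θ in (0:ℝ)..2 * Real.pi, ‖F (circleMap c R' θ)‖) ≤ M := by
      calc (2 * Real.pi)⁻¹ * (∫ θ in (0:ℝ)..2 * Real.pi, ‖F (circleMap c R' θ)‖)
          ≤ (2 * Real.pi)⁻¹ * (2 * Real.pi * M) := by gcongr
        _ = M := by field_simp
    have hRk : (0:ℝ) ≤ R⁻¹ ^ k := by positivity
    exact mul_le_mul_of_nonneg_right this hRk
  rw [h1]
  rw [nsmul_eq_mul]
  rw [norm_mul]
  have : ‖(k.factorial : ℂ)‖ = (k.factorial : ℝ) := by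
    simp
  rw [this]
  calc (k.factorial : ℝ) * ‖cauchyPowerSeries F c R' k fun _ => (1:ℂ)‖
      ≤ (k.factorial : ℝ) * (M * (R⁻¹) ^ k) := by gcongr
    _ = k.factorial * M / R ^ k := by
        rw [inv_pow]
        ring

/-- Iterated derivative of a complexified real function equals complex iterated derivative. -/
lemma itD_ofReal {F : ℂ → ℂ} (hF : Differentiable ℂ F) (k : ℕ) (x : ℝ) :
    iteratedDeriv k (fun t : ℝ => F t) x = iteratedDeriv k F x := by
  induction k generalizing F with
  | zero => simp
  | succ k ih =>
    have hF2 : ContDiff ℂ 2 F := hF.contDiff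
    have hd1 : Differentiable ℂ (iteratedDeriv 1 F) :=
      hF2.differentiable_iteratedDeriv 1 (by norm_num)
    rw [iteratedDeriv_one] at hd1
    rw [iteratedDeriv_succ', iteratedDeriv_succ']
    have hder : (deriv fun t : ℝ => F ↑t) = fun t : ℝ => deriv F ↑t := by
      funext t
      exact ((hF (t:ℂ)).hasDerivAt.comp_ofReal).deriv
    rw [hder]
    exact ih hd1

/-- On `Icc (-1) 1`, the iterated derivative within equals the global one. -/
lemma itDW_eq {f : ℝ → ℂ} (hf : ContDiff ℝ (⊤:ℕ∞) f) (k : ℕ) :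
    ∀ x ∈ Set.Icc (-1:ℝ) 1,
      iteratedDerivWithin k f (Set.Icc (-1:ℝ) 1) x = iteratedDeriv k f x := by
  have hu : UniqueDiffOn ℝ (Set.Icc (-1:ℝ) 1) := uniqueDiffOn_Icc (by norm_num)
  induction k with
  | zero => intro x _; simp
  | succ k ih =>
    intro x hx
    rw [iteratedDerivWithin_succ, iteratedDeriv_succ]
    rw [derivWithin_congr (fun y hy => ih y hy) (ih x hx)]
    refine DifferentiableAt.derivWithin ?_ (hu x hx)
    have : ContDiff ℝ ((k+1:ℕ)) f := hf.of_le (by exact_mod_cast le_top)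
    exact (this.differentiable_iteratedDeriv k
      (by exact_mod_cast Nat.lt_succ_self k)).differentiableAt

/-- The terms of the series defining `Φ` (apart from the `-x` term). -/
def fs (n : ℕ) : ℝ → ℂ := fun x => (1/2 : ℂ) ^ (n + 1) * S (n + 1) (x : ℂ)

/-- Upper bounds for iterated derivatives of the terms. -/
def v (k n : ℕ) : ℝ := 3 * k.factorial * (4 * ((n:ℝ) + 1)) ^ k * (1/2 : ℝ) ^ (n + 1)

lemma fs_contDiff (n : ℕ) {N : WithTop ℕ∞} : ContDiff ℝ N (fs n) := by
  have h1 : ContDiff ℂ N (S (n + 1)) := (S_diff (n + 1)).contDiff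
  have h2 : ContDiff ℝ N (S (n + 1)) := h1.restrict_scalars ℝ
  have h3 : ContDiff ℝ N (fun x : ℝ => S (n + 1) (x : ℂ)) :=
    h2.comp Complex.ofRealCLM.contDiff
  exact contDiff_const.mul h3

lemma norm_half_pow (n : ℕ) : ‖(1/2 : ℂ) ^ (n + 1)‖ = (1/2 : ℝ) ^ (n + 1) := by
  rw [norm_pow]
  norm_num

lemma fs_bound (k n : ℕ) (x : ℝ) : ‖iteratedFDeriv ℝ k (fs n) x‖ ≤ v k n := by
  rw [norm_iteratedFDeriv_eq_norm_iteratedDeriv]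
  have hsmul : fs n = ((1/2 : ℂ) ^ (n + 1)) • (fun x : ℝ => S (n + 1) (x : ℂ)) := by
    funext t
    simp [fs, smul_eq_mul]
  have hinner : ContDiff ℝ ((k:ℕ∞)) (fun x : ℝ => S (n + 1) (x : ℂ)) := by
    have h1 : ContDiff ℂ ((k:ℕ∞)) (S (n + 1)) := (S_diff (n + 1)).contDiff
    exact (h1.restrict_scalars ℝ).comp Complex.ofRealCLM.contDiff
  have heq : iteratedDeriv k (fs n) x
      = ((1/2 : ℂ) ^ (n + 1)) • iteratedDeriv k (fun x : ℝ => S (n + 1) (x : ℂ)) x := by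
    rw [hsmul]
    rw [iteratedDeriv_eq_iteratedFDeriv, iteratedDeriv_eq_iteratedFDeriv]
    rw [iteratedFDeriv_const_smul_apply (by exact_mod_cast hinner.contDiffAt)]
    rfl
  rw [heq, norm_smul, norm_half_pow]
  have hitd : iteratedDeriv k (fun x : ℝ => S (n + 1) (x : ℂ)) x
      = iteratedDeriv k (S (n + 1)) (x : ℂ) := itD_ofReal (S_diff (n + 1)) k x
  rw [hitd]
  set R : ℝ := 1 / (4 * ((n:ℝ) + 1)) with hR
  have hR0 : 0 < R := by positivity
  have hM : ∀ w ∈ Metric.closedBall (x:ℂ) R, ‖S (n + 1) w‖ ≤ 3 := by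
    intro w hw
    refine S_norm_le (Nat.le_add_left 1 n) ?_
    have h1 : |w.im| = |(w - (x:ℂ)).im| := by
      simp [Complex.sub_im, Complex.ofReal_im]
    have h2 : |(w - (x:ℂ)).im| ≤ ‖w - (x:ℂ)‖ := Complex.abs_im_le_norm _
    have h3 : ‖w - (x:ℂ)‖ ≤ R := by
      rw [← Complex.dist_eq]
      exact Metric.mem_closedBall.1 hw
    rw [h1]
    refine le_trans h2 (le_trans h3 ?_)
    rw [hR]
    push_cast
    rfl
  have hcauchy := cauchy_est (S_diff (n + 1)) hR0 hM k
  have hRk : R ^ k = 1 / (4 * ((n:ℝ) + 1)) ^ k := by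
    rw [hR, div_pow, one_pow]
  have hfinal : (k.factorial : ℝ) * 3 / R ^ k
      = 3 * k.factorial * (4 * ((n:ℝ) + 1)) ^ k := by
    rw [hRk]
    have h4 : (0:ℝ) < (4 * ((n:ℝ) + 1)) ^ k := by positivity
    field_simp
  calc (1/2 : ℝ) ^ (n + 1) * ‖iteratedDeriv k (S (n + 1)) (x : ℂ)‖
      ≤ (1/2 : ℝ) ^ (n + 1) * ((k.factorial : ℝ) * 3 / R ^ k) := by
        have hp : (0:ℝ) ≤ (1/2 : ℝ) ^ (n + 1) := by positivity
        exact mul_le_mul_of_nonneg_left hcauchy hp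
    _ = v k n := by rw [hfinal, v]; ring

lemma v_summable (k : ℕ) : Summable (v k) := by
  have h0 : Summable (fun n : ℕ => (n:ℝ) ^ k * (1/2 : ℝ) ^ n) :=
    summable_pow_mul_geometric_of_norm_lt_one k (by rw [Real.norm_eq_abs]; rw [abs_of_pos (by norm_num : (0:ℝ) < 1/2)]; norm_num)
  have h1 : Summable (fun n : ℕ => ((n+1:ℕ):ℝ) ^ k * (1/2 : ℝ) ^ (n+1)) :=
    (summable_nat_add_iff 1).2 h0
  have h2 := h1.mul_left (3 * (k.factorial : ℝ) * 4 ^ k)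
  refine h2.congr fun n => ?_
  rw [v]
  push_cast
  rw [mul_pow]
  ring

lemma sqrt2_facts : Real.sqrt 2 ^ 2 = 2 ∧ (4/3 : ℝ) ≤ Real.sqrt 2 ∧ Real.sqrt 2 ≤ 3/2 := by
  have hs2 : Real.sqrt 2 ^ 2 = 2 := Real.sq_sqrt (by norm_num)
  have hsnn : 0 ≤ Real.sqrt 2 := Real.sqrt_nonneg 2
  refine ⟨hs2, ?_, ?_⟩
  · nlinarith
  · nlinarith

lemma geom_claim (q : ℕ) : (q:ℝ) + 1 ≤ 3 * Real.sqrt 2 ^ q := by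
  obtain ⟨hs2, hs43, hs32⟩ := sqrt2_facts
  have hsnn : 0 ≤ Real.sqrt 2 := Real.sqrt_nonneg 2
  have hs1 : 1 ≤ Real.sqrt 2 := by nlinarith
  induction q with
  | zero => norm_num
  | succ p ih =>
    have hpow : Real.sqrt 2 ^ (p+1) = Real.sqrt 2 * Real.sqrt 2 ^ p := by ring
    rcases Nat.lt_or_ge p 2 with hp | hp
    · interval_cases p
      · push_cast
        nlinarith
      · push_cast
        nlinarith [hs2]
    · have hp' : (2:ℝ) ≤ p := by exact_mod_cast hp
      have h1 : ((p:ℝ) + 1) + 1 ≤ Real.sqrt 2 * ((p:ℝ) + 1) := by nlinarith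
      have h2 : Real.sqrt 2 * ((p:ℝ) + 1) ≤ Real.sqrt 2 * (3 * Real.sqrt 2 ^ p) := by
        have := mul_le_mul_of_nonneg_left ih hsnn
        linarith
      push_cast
      calc (p:ℝ) + 1 + 1 ≤ Real.sqrt 2 * ((p:ℝ) + 1) := h1
        _ ≤ Real.sqrt 2 * (3 * Real.sqrt 2 ^ p) := h2
        _ = 3 * Real.sqrt 2 ^ (p+1) := by ring

lemma aux_pow {k m : ℕ} (hk : 1 ≤ k) (hm : 1 ≤ m) :
    (m:ℝ) ^ k ≤ (3 * (k:ℝ)) ^ k * Real.sqrt 2 ^ m := by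
  obtain ⟨hs2, hs43, hs32⟩ := sqrt2_facts
  have hsnn : 0 ≤ Real.sqrt 2 := Real.sqrt_nonneg 2
  have hs1 : 1 ≤ Real.sqrt 2 := by nlinarith
  set q := m / k with hq
  have hk0 : 0 < k := hk
  have h1 : m < k * (q + 1) := by
    have hd : k * q + m % k = m := by rw [hq]; exact Nat.div_add_mod m k
    have hmod : m % k < k := Nat.mod_lt m hk0
    calc m = k * q + m % k := hd.symm
      _ < k * q + k := by omega
      _ = k * (q + 1) := by ring
  have h2 : q * k ≤ m := Nat.div_mul_le_self m k
  have hm3 : (m:ℝ) ≤ 3 * (k:ℝ) * Real.sqrt 2 ^ q := by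
    calc (m:ℝ) ≤ (k:ℝ) * ((q:ℝ) + 1) := by
          have := h1.le
          exact_mod_cast by
            push_cast
            exact_mod_cast (Nat.cast_le (α := ℝ)).2 this
      _ ≤ (k:ℝ) * (3 * Real.sqrt 2 ^ q) := by
          have hkn : (0:ℝ) ≤ (k:ℝ) := by positivity
          exact mul_le_mul_of_nonneg_left (geom_claim q) hkn
      _ = 3 * (k:ℝ) * Real.sqrt 2 ^ q := by ring
  calc (m:ℝ) ^ k ≤ (3 * (k:ℝ) * Real.sqrt 2 ^ q) ^ k := by
        refine pow_le_pow_left₀ (by positivity) hm3 k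
    _ = (3 * (k:ℝ)) ^ k * (Real.sqrt 2 ^ q) ^ k := by rw [mul_pow]
    _ = (3 * (k:ℝ)) ^ k * Real.sqrt 2 ^ (q * k) := by rw [← pow_mul]
    _ ≤ (3 * (k:ℝ)) ^ k * Real.sqrt 2 ^ m := by
        have := pow_le_pow_right₀ hs1 h2
        have hpos : (0:ℝ) ≤ (3 * (k:ℝ)) ^ k := by positivity
        exact mul_le_mul_of_nonneg_left this hpos

lemma half_pow_summable : Summable (fun n : ℕ => (1/2 : ℝ) ^ (n + 1)) :=
  (summable_nat_add_iff 1).2 (summable_geometric_of_lt_one (by norm_num) (by norm_num))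

lemma tsum_half_pow : ∑' n : ℕ, (1/2 : ℝ) ^ (n + 1) = 1 := by
  have h : ∀ n : ℕ, (1/2 : ℝ) ^ (n + 1) = (1/2 : ℝ) * (1/2)^n := fun n => by ring
  rw [tsum_congr h, tsum_mul_left, tsum_geometric_of_lt_one (by norm_num) (by norm_num)]
  norm_num

lemma tsum_v_le (k : ℕ) : ∑' n, v k n ≤ 9 * (k.factorial : ℝ) * 12 ^ k * (k:ℝ) ^ k := by
  rcases Nat.eq_zero_or_pos k with rfl | hk
  · have : ∀ n : ℕ, v 0 n = 3 * (1/2 : ℝ) ^ (n + 1) := by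
      intro n; rw [v]; norm_num
    rw [tsum_congr this, tsum_mul_left, tsum_half_pow]
    norm_num
  · obtain ⟨hs2, hs43, hs32⟩ := sqrt2_facts
    have hsnn : 0 ≤ Real.sqrt 2 := Real.sqrt_nonneg 2
    have hs1 : 1 ≤ Real.sqrt 2 := by nlinarith
    set r : ℝ := Real.sqrt 2 / 2 with hr
    have hr0 : 0 ≤ r := by positivity
    have hr1 : r < 1 := by rw [hr]; linarith
    have hw_sum : Summable (fun n : ℕ => r ^ (n + 1)) :=
      (summable_nat_add_iff 1).2 (summable_geometric_of_lt_one hr0 hr1)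
    set W : ℝ := 3 * (k.factorial : ℝ) * (12 * (k:ℝ)) ^ k with hW
    have hW0 : 0 ≤ W := by positivity
    have hterm : ∀ n : ℕ, v k n ≤ W * r ^ (n + 1) := by
      intro n
      rw [v, hW]
      have hkey := aux_pow hk (Nat.succ_le_succ (Nat.zero_le n)) (m := n + 1)
      have e1 : (4 * ((n:ℝ) + 1)) ^ k = 4 ^ k * ((n:ℝ) + 1) ^ k := by rw [← mul_pow]
      have e2 : ((n:ℝ) + 1) = ((n + 1 : ℕ):ℝ) := by push_cast; ring
      have e3 : ((n + 1 : ℕ):ℝ) ^ k ≤ (3 * (k:ℝ)) ^ k * Real.sqrt 2 ^ (n + 1) := hkey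
      have e4 : r ^ (n + 1) = Real.sqrt 2 ^ (n + 1) * (1/2 : ℝ) ^ (n + 1) := by
        rw [hr, div_pow, div_eq_mul_inv, ← inv_pow]
        norm_num
      rw [e1, e2, e4]
      have e5 : (12 * (k:ℝ)) ^ k = 4 ^ k * (3 * (k:ℝ)) ^ k := by
        rw [← mul_pow]
        congr 1
        ring
      rw [e5]
      have hp : (0:ℝ) ≤ 3 * (k.factorial : ℝ) * 4 ^ k * (1/2 : ℝ) ^ (n + 1) := by positivity
      calc 3 * (k.factorial : ℝ) * (4 ^ k * ((n + 1 : ℕ):ℝ) ^ k) * (1/2) ^ (n + 1)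
          ≤ 3 * (k.factorial : ℝ) * (4 ^ k * ((3 * (k:ℝ)) ^ k * Real.sqrt 2 ^ (n + 1)))
              * (1/2) ^ (n + 1) := by
            have h4 : (0:ℝ) ≤ 4 ^ k := by positivity
            have h5 : (0:ℝ) ≤ 3 * (k.factorial : ℝ) := by positivity
            have h6 : (0:ℝ) ≤ (1/2 : ℝ) ^ (n + 1) := by positivity
            gcongr
        _ = 3 * (k.factorial : ℝ) * (4 ^ k * (3 * (k:ℝ)) ^ k)
              * (Real.sqrt 2 ^ (n + 1) * (1/2) ^ (n + 1)) := by ring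
    have htsum_r : ∑' n : ℕ, r ^ (n + 1) ≤ 3 := by
      have h : ∀ n : ℕ, r ^ (n + 1) = r * r ^ n := fun n => by ring
      rw [tsum_congr h, tsum_mul_left, tsum_geometric_of_lt_one hr0 hr1]
      have h2r : 0 < 1 - r := by linarith
      rw [← div_eq_mul_inv, div_le_iff₀ h2r]
      rw [hr]
      linarith
    calc ∑' n, v k n ≤ ∑' n : ℕ, W * r ^ (n + 1) :=
          Summable.tsum_le_tsum hterm (v_summable k) (hw_sum.mul_left W)
      _ = W * ∑' n : ℕ, r ^ (n + 1) := tsum_mul_left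
      _ ≤ W * 3 := by
          exact mul_le_mul_of_nonneg_left htsum_r hW0
      _ = 9 * (k.factorial : ℝ) * 12 ^ k * (k:ℝ) ^ k := by
          rw [hW, mul_pow]
          ring

/-- The series part of the solution. -/
def Tf : ℝ → ℂ := fun x => ∑' n, fs n x

/-- The solution `Φ(x) = -x - ∑_{n ≥ 1} 2^{-n} sin^{∘n}(x)`. -/
def Phi : ℝ → ℂ := fun x => -(x:ℂ) - Tf x

lemma g0_contDiff {N : WithTop ℕ∞} : ContDiff ℝ N (fun x : ℝ => -(x:ℂ)) :=
  Complex.ofRealCLM.contDiff.neg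

lemma Tf_contDiff : ContDiff ℝ ((⊤:ℕ∞) : WithTop ℕ∞) Tf :=
  contDiff_tsum (fun n => fs_contDiff n) (fun k _ => v_summable k)
    (fun k n x _ => fs_bound k n x)

lemma Phi_contDiff : ContDiff ℝ ((⊤:ℕ∞) : WithTop ℕ∞) Phi :=
  g0_contDiff.sub Tf_contDiff

lemma Tf_iteratedFDeriv_bound (k : ℕ) (x : ℝ) :
    ‖iteratedFDeriv ℝ k Tf x‖ ≤ ∑' n, v k n := by
  have heq : iteratedFDeriv ℝ k Tf x = ∑' n, iteratedFDeriv ℝ k (fs n) x :=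
    iteratedFDeriv_tsum_apply (fun n => fs_contDiff n) (fun k _ => v_summable k)
      (fun k n x _ => fs_bound k n x) le_top x
  rw [heq]
  have hsn : Summable fun n => ‖iteratedFDeriv ℝ k (fs n) x‖ :=
    Summable.of_nonneg_of_le (fun n => norm_nonneg _) (fun n => fs_bound k n x) (v_summable k)
  calc ‖∑' n, iteratedFDeriv ℝ k (fs n) x‖ ≤ ∑' n, ‖iteratedFDeriv ℝ k (fs n) x‖ :=
        norm_tsum_le_tsum_norm hsn
    _ ≤ ∑' n, v k n := Summable.tsum_le_tsum (fun n => fs_bound k n x) hsn (v_summable k)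

lemma g0_deriv_bound (k : ℕ) {x : ℝ} (hx : x ∈ Set.Icc (-1:ℝ) 1) :
    ‖iteratedDeriv k (fun x : ℝ => -(x:ℂ)) x‖ ≤ 2 * k.factorial := by
  have hdiff : Differentiable ℂ (fun z : ℂ => -z) := differentiable_id.neg
  have heq : iteratedDeriv k (fun x : ℝ => -(x:ℂ)) x
      = iteratedDeriv k (fun z : ℂ => -z) (x:ℂ) := itD_ofReal hdiff k x
  rw [heq]
  have hM : ∀ w ∈ Metric.closedBall (x:ℂ) 1, ‖-w‖ ≤ 2 := by
    intro w hw
    rw [norm_neg]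
    have h1 : dist w (x:ℂ) ≤ 1 := Metric.mem_closedBall.1 hw
    have h2 : ‖(x:ℂ)‖ ≤ 1 := by
      rw [Complex.norm_real, Real.norm_eq_abs]
      rw [abs_le]
      exact ⟨hx.1, hx.2⟩
    calc ‖w‖ = ‖(w - (x:ℂ)) + (x:ℂ)‖ := by ring_nf
      _ ≤ ‖w - (x:ℂ)‖ + ‖(x:ℂ)‖ := norm_add_le _ _
      _ ≤ 1 + 1 := by
          have h3 : ‖w - (x:ℂ)‖ ≤ 1 := mem_closedBall_iff_norm.1 hw
          exact add_le_add h3 h2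
      _ = 2 := by norm_num
  have h := cauchy_est hdiff one_pos hM k
  have e : (k.factorial : ℝ) * 2 / 1 ^ k = 2 * k.factorial := by
    rw [one_pow]; ring
  rw [e] at h
  exact h

set_option maxHeartbeats 1000000 in
lemma Phi_deriv_bound (k : ℕ) {x : ℝ} (hx : x ∈ Set.Icc (-1:ℝ) 1) :
    ‖iteratedDeriv k Phi x‖ ≤ 16 * 12 ^ k * ((k:ℝ) ^ k * (k:ℝ) ^ k) := by
  rw [← norm_iteratedFDeriv_eq_norm_iteratedDeriv]
  have hsplit : Phi = (fun x : ℝ => -(x:ℂ)) + (-Tf) := by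
    funext t
    simp [Phi, Tf, sub_eq_add_neg]
  have hadd : iteratedFDeriv ℝ k Phi x
      = iteratedFDeriv ℝ k (fun x : ℝ => -(x:ℂ)) x + iteratedFDeriv ℝ k (-Tf) x := by
    rw [hsplit]
    exact iteratedFDeriv_add_apply (g0_contDiff.contDiffAt) ((Tf_contDiff.of_le (by exact_mod_cast (le_top : (k:ℕ∞) ≤ ⊤))).neg.contDiffAt)
  have hneg : iteratedFDeriv ℝ k (-Tf) x = -iteratedFDeriv ℝ k Tf x :=
    iteratedFDeriv_neg_apply
  have h1 : ‖iteratedFDeriv ℝ k Phi x‖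
      ≤ ‖iteratedFDeriv ℝ k (fun x : ℝ => -(x:ℂ)) x‖ + ‖iteratedFDeriv ℝ k Tf x‖ := by
    rw [hadd, hneg]
    refine le_trans (norm_add_le _ _) ?_
    rw [norm_neg]
  have h2 : ‖iteratedFDeriv ℝ k (fun x : ℝ => -(x:ℂ)) x‖ ≤ 2 * k.factorial := by
    rw [norm_iteratedFDeriv_eq_norm_iteratedDeriv]
    exact g0_deriv_bound k hx
  have h3 : ‖iteratedFDeriv ℝ k Tf x‖ ≤ 9 * (k.factorial : ℝ) * 12 ^ k * (k:ℝ) ^ k :=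
    le_trans (Tf_iteratedFDeriv_bound k x) (tsum_v_le k)
  have hfac : (k.factorial : ℝ) ≤ (k:ℝ) ^ k := by
    have := Nat.factorial_le_pow k
    exact_mod_cast this
  have hkk : (1:ℝ) ≤ (k:ℝ) ^ k := by
    rcases Nat.eq_zero_or_pos k with rfl | hk
    · norm_num
    · refine one_le_pow₀ ?_
      exact_mod_cast hk
  have h12 : (1:ℝ) ≤ 12 ^ k := one_le_pow₀ (by norm_num)
  have hfac0 : (0:ℝ) ≤ (k.factorial : ℝ) := by positivity
  calc ‖iteratedFDeriv ℝ k Phi x‖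
      ≤ 2 * k.factorial + 9 * (k.factorial : ℝ) * 12 ^ k * (k:ℝ) ^ k := by linarith
    _ ≤ 2 * ((k:ℝ) ^ k * 12 ^ k * (k:ℝ) ^ k) + 9 * ((k:ℝ) ^ k * 12 ^ k * (k:ℝ) ^ k) := by
        have hb1 : (k.factorial : ℝ) * 1 * 1 ≤ (k:ℝ) ^ k * 12 ^ k * (k:ℝ) ^ k := by
          have : (0:ℝ) ≤ (k:ℝ) ^ k := by positivity
          gcongr
        have hb2 : (k.factorial : ℝ) * 12 ^ k * (k:ℝ) ^ k
            ≤ (k:ℝ) ^ k * 12 ^ k * (k:ℝ) ^ k := by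
          have h12p : (0:ℝ) ≤ (12:ℝ) ^ k := by positivity
          have hkp : (0:ℝ) ≤ (k:ℝ) ^ k := by positivity
          gcongr
        nlinarith [hb1, hb2]
    _ = 11 * ((k:ℝ) ^ k * 12 ^ k * (k:ℝ) ^ k) := by ring
    _ ≤ 16 * 12 ^ k * ((k:ℝ) ^ k * (k:ℝ) ^ k) := by nlinarith [hkk, h12, pow_nonneg (by norm_num : (0:ℝ) ≤ 12) k, pow_nonneg (Nat.cast_nonneg k : (0:ℝ) ≤ k) k]

lemma summable_aux {y : ℝ} (hy : |y| ≤ 1) :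
    Summable (fun n : ℕ => (1/2 : ℂ) ^ (n + 1) * S n (y:ℂ)) := by
  refine Summable.of_norm_bounded half_pow_summable ?_
  intro n
  rw [norm_mul, norm_half_pow]
  calc (1/2 : ℝ) ^ (n + 1) * ‖S n (y:ℂ)‖ ≤ (1/2 : ℝ) ^ (n + 1) * 1 := by
        have := S_norm_le_one (n := n) hy
        have hp : (0:ℝ) ≤ (1/2 : ℝ) ^ (n + 1) := by positivity
        exact mul_le_mul_of_nonneg_left this hp
    _ = (1/2 : ℝ) ^ (n + 1) := mul_one _

lemma feq (x : ℝ) : Phi x - (1/2 : ℂ) * Phi (Real.sin x) = -(x:ℂ) := by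
  set y := Real.sin x with hy
  have hy1 : |y| ≤ 1 := abs_le.2 ⟨Real.neg_one_le_sin x, Real.sin_le_one x⟩
  have hsum1 : Summable (fun n : ℕ => (1/2 : ℂ) ^ (n + 1) * S n (y:ℂ)) := summable_aux hy1
  have hTx : Tf x = ∑' n : ℕ, (1/2 : ℂ) ^ (n + 1) * S n (y:ℂ) := by
    refine tsum_congr fun n => ?_
    rw [fs, S_succ, ← Complex.ofReal_sin]
  have hpeel : ∑' n : ℕ, (1/2 : ℂ) ^ (n + 1) * S n (y:ℂ)
      = (1/2 : ℂ) * (y:ℂ) + ∑' n : ℕ, (1/2 : ℂ) ^ (n + 2) * S (n + 1) (y:ℂ) := by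
    rw [Summable.tsum_eq_zero_add hsum1]
    have h0 : S 0 (y:ℂ) = (y:ℂ) := rfl
    rw [h0]
    norm_num
  have hTy : ∑' n : ℕ, (1/2 : ℂ) ^ (n + 2) * S (n + 1) (y:ℂ) = (1/2 : ℂ) * Tf y := by
    have h : ∀ n : ℕ, (1/2 : ℂ) ^ (n + 2) * S (n + 1) (y:ℂ)
        = (1/2 : ℂ) * ((1/2 : ℂ) ^ (n + 1) * S (n + 1) (y:ℂ)) := by
      intro n; ring
    rw [tsum_congr h, tsum_mul_left]
    rfl
  have hTfx : Tf x = (1/2 : ℂ) * (y:ℂ) + (1/2 : ℂ) * Tf y := by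
    rw [hTx, hpeel, hTy]
  show -(x:ℂ) - Tf x - (1/2 : ℂ) * (-(y:ℂ) - Tf y) = -(x:ℂ)
  rw [hTfx]
  ring

lemma Phi_cont : ContinuousOn Phi (Set.Icc (-1:ℝ) 1) :=
  Phi_contDiff.continuous.continuousOn

end SinEqAux

open SinEqAux


/-- the equation `Φ(x) - (1/2) Φ(sin x) = -x` has on `[-1,1]` a
unique continuous solution, which belongs to `G_1([-1,1])`. -/
theorem example_sin_equation :
    ∃ Φ : ℝ → ℂ,
      (ContinuousOn Φ (Set.Icc (-1) 1) ∧
        ∀ x ∈ Set.Icc (-1 : ℝ) 1,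
          Φ x - (1 / 2 : ℂ) * Φ (Real.sin x) = -(x : ℂ)) ∧
      GevreyClass 1 Φ ∧
      ∀ Ψ : ℝ → ℂ, ContinuousOn Ψ (Set.Icc (-1) 1) →
        (∀ x ∈ Set.Icc (-1 : ℝ) 1,
          Ψ x - (1 / 2 : ℂ) * Ψ (Real.sin x) = -(x : ℂ)) →
        ∀ x ∈ Set.Icc (-1 : ℝ) 1, Ψ x = Φ x := by

  refine ⟨Phi, ⟨Phi_cont, fun x _ => ?_⟩, ⟨Phi_contDiff.contDiffOn, 16, by norm_num, 12,
    by norm_num, ?_⟩, ?_⟩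
  · have h := feq x
    simpa using h
  · -- Gevrey bound
    intro n x hx
    rw [itDW_eq Phi_contDiff n x hx]
    have hexp : (n:ℝ) * (1 + 1 / 1) = ((n + n : ℕ) : ℝ) := by push_cast; ring
    rw [hexp, Real.rpow_natCast, pow_add]
    exact Phi_deriv_bound n hx
  · -- uniqueness
    intro Ψ hΨc hΨeq
    have hc : ContinuousOn (fun t => Ψ t - Phi t) (Set.Icc (-1:ℝ) 1) :=
      hΨc.sub Phi_cont
    obtain ⟨M, hM⟩ := (isCompact_Icc (a := (-1:ℝ)) (b := 1)).exists_bound_of_continuousOn hc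
    have key : ∀ N : ℕ, ∀ x ∈ Set.Icc (-1:ℝ) 1, ‖Ψ x - Phi x‖ ≤ (1/2 : ℝ) ^ N * M := by
      intro N
      induction N with
      | zero => intro x hx; simpa using hM x hx
      | succ N ih =>
        intro x hx
        have hsin : Real.sin x ∈ Set.Icc (-1:ℝ) 1 :=
          ⟨Real.neg_one_le_sin x, Real.sin_le_one x⟩
        have e1 := hΨeq x hx
        have e2 := feq x
        have e3 : Ψ x - Phi x = (1/2 : ℂ) * (Ψ (Real.sin x) - Phi (Real.sin x)) := by
          have hh : Phi x - (1 / 2 : ℂ) * Phi (Real.sin x) = -(x : ℂ) := e2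
          linear_combination e1 - hh
        rw [e3, norm_mul]
        have hn : ‖(1/2 : ℂ)‖ = (1/2 : ℝ) := by norm_num
        rw [hn]
        have := ih (Real.sin x) hsin
        calc (1/2 : ℝ) * ‖Ψ (Real.sin x) - Phi (Real.sin x)‖
            ≤ (1/2 : ℝ) * ((1/2 : ℝ) ^ N * M) := by
              exact mul_le_mul_of_nonneg_left this (by norm_num)
          _ = (1/2 : ℝ) ^ (N + 1) * M := by ring
    intro x hx
    have hzero : ‖Ψ x - Phi x‖ ≤ 0 := by
      have htend : Filter.Tendsto (fun N : ℕ => (1/2 : ℝ) ^ N * M) Filter.atTop (nhds 0) := by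
        have h1 : Filter.Tendsto (fun N : ℕ => (1/2 : ℝ) ^ N) Filter.atTop (nhds 0) :=
          tendsto_pow_atTop_nhds_zero_of_lt_one (by norm_num) (by norm_num)
        simpa using h1.mul_const M
      exact ge_of_tendsto' htend (fun N => key N x hx)
    have : Ψ x - Phi x = 0 := by
      rwa [← norm_le_zero_iff]
    exact sub_eq_zero.1 this
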